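/- Fix ε with 0 < ε < 1/3. Let Y_{n,ε} be the number of nodes v of a uniformly random ordered binary tree with n leaves whose fringe subtree t(v) has more than n^ε leaves. Then there is a constant C > 0 such that E(Y_{n,ε}) ≤ C·n^{1−ε/2} for all n ≥ 1. -/

import Mathlib

open Filter Finset
open scoped Classical

/-- Ordered binary trees: every node has exactly two or no children. -/
inductive BT : Type
  | leaf : BT
  | node : BT → BT → BT
deriving DecidableEq

namespace BT

/-- The size of a binary tree: its number of leaves. -/
def size : BT → ℕ
  | leaf => 1
  | node l r => size l + size r

/-- The multiset of all fringe subtrees of a tree (one for every node). -/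
def fringe : BT → Multiset BT
  | leaf => {leaf}
  | node l r => node l r ::ₘ (fringe l + fringe r)

/-- The finset of all ordered binary trees with `n` leaves. -/
def treesOfSize : ℕ → Finset BT
  | 0 => ∅
  | 1 => {leaf}
  | n + 2 =>
    (Finset.range (n + 1)).attach.biUnion fun k =>
      ((treesOfSize (k.1 + 1)) ×ˢ (treesOfSize (n + 1 - k.1))).image fun p => node p.1 p.2
  decreasing_by
    · have := Finset.mem_range.mp k.2; omega
    · omega

/-- Boolean test whether two ordered binary trees are isomorphic as unordered trees. -/
def isoB : BT → BT → Bool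
  | leaf, leaf => true
  | leaf, node _ _ => false
  | node _ _, leaf => false
  | node l1 r1, node l2 r2 => (isoB l1 l2 && isoB r1 r2) || (isoB l1 r2 && isoB r1 l2)

/-- An injective encoding of ordered binary trees into the natural numbers. -/
def encode : BT → ℕ
  | leaf => 0
  | node l r => Nat.pair (encode l) (encode r) + 1

/-- The canonical representative of the isomorphism class of a binary tree:
two trees are isomorphic (equal as unordered trees) iff their canonical forms agree. -/
def canon : BT → BT
  | leaf => leaf
  | node l r =>
    let l' := canon l
    let r' := canon r
    if encode l' ≤ encode r' then node l' r' else node r' l'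

/-- Number of isomorphism classes of unordered binary trees represented among
the fringe subtrees of `t`. -/
def isoClasses (t : BT) : ℕ := ((fringe t).toFinset.image canon).card

/-- Number of distinct ordered binary trees occurring among the fringe subtrees of `t`. -/
def numDistinct (t : BT) : ℕ := (fringe t).toFinset.card

/-- The probability of a tree under the binary search tree model. -/
noncomputable def pbst (t : BT) : ℝ :=
  ((fringe t).map fun s => if 1 < size s then (1 : ℝ) / ((size s : ℝ) - 1) else 1).prod

/-- Expectation of `f` under the uniform distribution on trees with `n` leaves. -/
noncomputable def unifE (n : ℕ) (f : BT → ℝ) : ℝ :=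
  (∑ t ∈ treesOfSize n, f t) / (treesOfSize n).card

/-- Probability of an event under the uniform distribution on trees with `n` leaves. -/
noncomputable def unifP (n : ℕ) (p : BT → Prop) : ℝ :=
  ((treesOfSize n).filter p).card / (treesOfSize n).card

/-- Expectation of `f` under the binary search tree distribution on trees with `n` leaves. -/
noncomputable def bstE (n : ℕ) (f : BT → ℝ) : ℝ :=
  ∑ t ∈ treesOfSize n, pbst t * f t

/-- Probability of an event under the binary search tree distribution on trees with `n` leaves. -/
noncomputable def bstP (n : ℕ) (p : BT → Prop) : ℝ :=
  ∑ t ∈ (treesOfSize n).filter p, pbst t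

end BT

namespace BT

lemma size_pos (t : BT) : 0 < size t := by
  induction t with
  | leaf => simp [size]
  | node l r ihl ihr => simp [size]; omega

lemma node_injective {l r l' r' : BT} (h : node l r = node l' r') : l = l' ∧ r = r' := by
  cases h; exact ⟨rfl, rfl⟩

lemma size_of_mem : ∀ n, ∀ t ∈ treesOfSize n, size t = n := by
  intro n
  induction n using Nat.strong_induction_on with
  | _ n ih =>
    match n with
    | 0 => simp [treesOfSize]
    | 1 => intro t ht; simp [treesOfSize] at ht; simp [ht, size]
    | n + 2 =>
      intro t ht
      rw [treesOfSize] at ht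
      simp only [Finset.mem_biUnion, Finset.mem_attach, Finset.mem_image, Finset.mem_product,
        true_and] at ht
      obtain ⟨k, ⟨p, ⟨hp1, hp2⟩, rfl⟩⟩ := ht
      have hk := Finset.mem_range.mp k.2
      have h1 := ih (k.1 + 1) (by omega) _ hp1
      have h2 := ih (n + 1 - k.1) (by omega) _ hp2
      simp [size, h1, h2]; omega

lemma sum_treesOfSize_succ_succ {M : Type*} [AddCommMonoid M] (n : ℕ) (f : BT → M) :
    ∑ t ∈ treesOfSize (n + 2), f t =
      ∑ k ∈ Finset.range (n + 1), ∑ l ∈ treesOfSize (k + 1),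
        ∑ r ∈ treesOfSize (n + 1 - k), f (node l r) := by
  rw [treesOfSize]
  rw [Finset.sum_biUnion]
  · rw [← Finset.sum_attach (Finset.range (n+1)) (fun k => ∑ l ∈ treesOfSize (k + 1),
        ∑ r ∈ treesOfSize (n + 1 - k), f (node l r))]
    refine Finset.sum_congr rfl ?_
    intro k _
    rw [Finset.sum_image]
    · rw [Finset.sum_product]
    · rintro ⟨a, b⟩ _ ⟨c, d⟩ _ h
      obtain ⟨h1, h2⟩ := node_injective h
      simp only at h1 h2
      simp [h1, h2]
  · rintro i - j - hij
    simp only [Finset.disjoint_left]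
    intro t hti htj
    simp only [Finset.mem_image, Finset.mem_product] at hti htj
    obtain ⟨⟨a, b⟩, ⟨ha, hb⟩, rfl⟩ := hti
    obtain ⟨⟨c, d⟩, ⟨hc, hd⟩, he⟩ := htj
    obtain ⟨h1, h2⟩ := node_injective he.symm
    have hsa := size_of_mem _ _ ha
    have hsc := size_of_mem _ _ hc
    simp only at h1 h2 hsa hsc
    rw [h1, hsc] at hsa
    exact hij (Subtype.ext (by omega))

lemma card_treesOfSize : ∀ n, (treesOfSize (n + 1)).card = catalan n := by
  intro n
  induction n using Nat.strong_induction_on with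
  | _ n ih =>
    match n with
    | 0 => simp [treesOfSize]
    | n + 1 =>
      have : ((treesOfSize (n + 2)).card : ℕ) = ∑ t ∈ treesOfSize (n + 2), 1 :=
        (Finset.card_eq_sum_ones _).trans rfl
      rw [this, sum_treesOfSize_succ_succ]
      rw [catalan_succ]
      rw [← Fin.sum_univ_eq_sum_range (fun i => ∑ l ∈ treesOfSize (i + 1),
        ∑ r ∈ treesOfSize (n + 1 - i), (1:ℕ))]
      refine Finset.sum_congr rfl ?_
      intro k _
      have hk : k.1 < n + 1 := k.2
      have h1 : (treesOfSize (k.1 + 1)).card = catalan k.1 := ih k.1 (by omega)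
      have h2 : (treesOfSize (n - k.1 + 1)).card = catalan (n - k.1) := ih (n - k.1) (by omega)
      have hnk : n + 1 - k.1 = n - k.1 + 1 := by omega
      simp only [Finset.sum_const, smul_eq_mul, mul_one, ← Finset.card_eq_sum_ones, hnk, h1, h2]

end BT
namespace BT

lemma size_le_of_mem_fringe : ∀ t : BT, ∀ s ∈ fringe t, size s ≤ size t := by
  intro t
  induction t with
  | leaf => intro s hs; simp [fringe] at hs; simp [hs]
  | node l r ihl ihr =>
    intro s hs
    rw [fringe, Multiset.mem_cons] at hs
    rcases hs with h | h
    · simp [h]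
    · rw [Multiset.mem_add] at h
      have hl : 0 < size l := size_pos l
      have hr : 0 < size r := size_pos r
      rcases h with h | h
      · have := ihl s h; simp [size]; omega
      · have := ihr s h; simp [size]; omega

lemma countP_fringe_eq_zero (t : BT) (m : ℕ) (h : size t < m) :
    (fringe t).countP (fun s => size s = m) = 0 :=
  Multiset.countP_eq_zero.mpr fun s hs => by
    have := size_le_of_mem_fringe t s hs; omega

lemma G_zero (n m : ℕ) (h : n < m) :
    ∑ t ∈ treesOfSize n, (fringe t).countP (fun s => size s = m) = 0 :=
  Finset.sum_eq_zero fun t ht =>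
    countP_fringe_eq_zero t m (by rw [size_of_mem n t ht]; exact h)

lemma catalan_succ_range (s : ℕ) :
    catalan (s + 1) = ∑ i ∈ Finset.range (s + 1), catalan i * catalan (s - i) := by
  rw [catalan_succ]
  exact Fin.sum_univ_eq_sum_range (fun i => catalan i * catalan (s - i)) (s + 1)

lemma weighted_catalan (s : ℕ) :
    2 * ∑ i ∈ Finset.range (s + 1), (i + 1) * (catalan i * catalan (s - i))
      = (s + 2) * catalan (s + 1) := by
  have h1 : ∑ i ∈ Finset.range (s + 1), (i + 1) * (catalan i * catalan (s - i))
      = ∑ i ∈ Finset.range (s + 1), (s - i + 1) * (catalan (s - i) * catalan i) := by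
    rw [← Finset.sum_range_reflect (fun i => (i + 1) * (catalan i * catalan (s - i))) (s + 1)]
    refine Finset.sum_congr rfl fun i hi => ?_
    have hi' := Finset.mem_range.mp hi
    have e1 : s + 1 - 1 - i = s - i := by omega
    have e2 : s - (s - i) = i := by omega
    rw [e1, e2]
  have h2 : 2 * ∑ i ∈ Finset.range (s + 1), (i + 1) * (catalan i * catalan (s - i))
      = ∑ i ∈ Finset.range (s + 1), ((i + 1) * (catalan i * catalan (s - i))
        + (s - i + 1) * (catalan (s - i) * catalan i)) := by
    rw [Finset.sum_add_distrib, ← h1]; ring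
  rw [h2, catalan_succ_range, Finset.mul_sum]
  refine Finset.sum_congr rfl fun i hi => ?_
  have hi' := Finset.mem_range.mp hi
  have : s - i + 1 = s + 1 - i := by omega
  rw [this]
  have h3 : (i + 1) + (s + 1 - i) = s + 2 := by omega
  rw [mul_comm (catalan (s - i)) (catalan i), ← add_mul, h3]

lemma G_eq : ∀ n m : ℕ, 1 ≤ m → m ≤ n →
    ∑ t ∈ treesOfSize n, (fringe t).countP (fun s => size s = m)
      = catalan (m - 1) * ((n - m + 1) * catalan (n - m)) := by
  intro n
  induction n using Nat.strong_induction_on with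
  | _ n ih =>
    match n with
    | 0 => intro m h1 h2; omega
    | 1 =>
      intro m h1 h2
      have hm : m = 1 := by omega
      subst hm
      simp only [treesOfSize, Finset.sum_singleton, fringe]
      rw [show ({leaf} : Multiset BT) = leaf ::ₘ 0 from rfl, Multiset.countP_cons]
      simp [size]
    | p + 2 =>
      intro m hm1 hm2
      rw [sum_treesOfSize_succ_succ]
      have step : ∀ k ∈ Finset.range (p + 1),
          (∑ l ∈ treesOfSize (k + 1), ∑ r ∈ treesOfSize (p + 1 - k),
            (fringe (node l r)).countP (fun s => size s = m))
          = (if p + 2 = m then 1 else 0) * (catalan k * catalan (p - k))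
            + ((∑ l ∈ treesOfSize (k + 1), (fringe l).countP (fun s => size s = m))
                * catalan (p - k)
              + catalan k *
                (∑ r ∈ treesOfSize (p + 1 - k), (fringe r).countP (fun s => size s = m))) := by
        intro k hk
        have hk' := Finset.mem_range.mp hk
        have inner : ∀ l ∈ treesOfSize (k + 1), ∀ r ∈ treesOfSize (p + 1 - k),
            (fringe (node l r)).countP (fun s => size s = m)
            = (if p + 2 = m then 1 else 0)
              + ((fringe l).countP (fun s => size s = m)
                + (fringe r).countP (fun s => size s = m)) := by
          intro l hl r hr
          rw [fringe, Multiset.countP_cons, Multiset.countP_add]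
          have hs : size (node l r) = p + 2 := by
            simp only [size, size_of_mem _ _ hl, size_of_mem _ _ hr]; omega
          simp only [hs]
          by_cases h : p + 2 = m <;> simp [h] <;> omega
        rw [Finset.sum_congr rfl fun l hl => Finset.sum_congr rfl fun r hr => inner l hl r hr]
        have hc1 : (treesOfSize (k + 1)).card = catalan k := card_treesOfSize k
        have hc2 : (treesOfSize (p + 1 - k)).card = catalan (p - k) := by
          have : p + 1 - k = (p - k) + 1 := by omega
          rw [this]; exact card_treesOfSize (p - k)
        simp only [Finset.sum_add_distrib, Finset.sum_const, smul_eq_mul,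
          ← Finset.sum_mul, ← Finset.mul_sum, hc1, hc2]
        ring
      rw [Finset.sum_congr rfl step]
      simp only [Finset.sum_add_distrib]
      by_cases hcase : p + 2 = m
      · -- m = p + 2 : only root contributes
        have hz1 : ∀ k ∈ Finset.range (p + 1),
            (∑ l ∈ treesOfSize (k + 1), (fringe l).countP (fun s => size s = m))
              * catalan (p - k) = 0 := by
          intro k hk
          have hk' := Finset.mem_range.mp hk
          rw [G_zero (k + 1) m (by omega), zero_mul]
        have hz2 : ∀ k ∈ Finset.range (p + 1),
            catalan k * (∑ r ∈ treesOfSize (p + 1 - k),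
              (fringe r).countP (fun s => size s = m)) = 0 := by
          intro k hk
          have hk' := Finset.mem_range.mp hk
          rw [G_zero (p + 1 - k) m (by omega), mul_zero]
        rw [Finset.sum_congr rfl hz1, Finset.sum_congr rfl hz2]
        simp only [Finset.sum_const_zero, add_zero, if_pos hcase, one_mul]
        rw [← catalan_succ_range]
        have e1 : m - 1 = p + 1 := by omega
        have e2 : p + 2 - m = 0 := by omega
        rw [e1, e2]
        simp
      · -- m ≤ p + 1
        have hm2' : m ≤ p + 1 := by omega
        simp only [if_neg hcase, zero_mul, Finset.sum_const_zero, zero_add]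
        -- reflect the second sum
        have hrefl : ∑ k ∈ Finset.range (p + 1), catalan k *
              (∑ r ∈ treesOfSize (p + 1 - k), (fringe r).countP (fun s => size s = m))
            = ∑ k ∈ Finset.range (p + 1),
              (∑ l ∈ treesOfSize (k + 1), (fringe l).countP (fun s => size s = m))
                * catalan (p - k) := by
          rw [← Finset.sum_range_reflect (fun k => catalan k *
            (∑ r ∈ treesOfSize (p + 1 - k), (fringe r).countP (fun s => size s = m))) (p + 1)]
          refine Finset.sum_congr rfl fun k hk => ?_
          have hk' := Finset.mem_range.mp hk
          have e1 : p + 1 - 1 - k = p - k := by omega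
          have e2 : p + 1 - (p - k) = k + 1 := by omega
          rw [e1, e2, mul_comm]
        rw [hrefl, ← two_mul]
        -- restrict to k ≥ m - 1
        have hsub : ∑ k ∈ Finset.range (p + 1),
              (∑ l ∈ treesOfSize (k + 1), (fringe l).countP (fun s => size s = m))
                * catalan (p - k)
            = ∑ k ∈ Finset.Ico (m - 1) (p + 1),
              (∑ l ∈ treesOfSize (k + 1), (fringe l).countP (fun s => size s = m))
                * catalan (p - k) := by
          refine (Finset.sum_subset ?_ ?_).symm
          · intro k hk
            rw [Finset.mem_Ico] at hk
            exact Finset.mem_range.mpr hk.2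
          · intro k hk1 hk2
            rw [Finset.mem_range] at hk1
            rw [Finset.mem_Ico] at hk2
            have : k + 1 < m := by omega
            rw [G_zero (k + 1) m this, zero_mul]
        rw [hsub]
        have hval : ∀ k ∈ Finset.Ico (m - 1) (p + 1),
            (∑ l ∈ treesOfSize (k + 1), (fringe l).countP (fun s => size s = m))
              * catalan (p - k)
            = catalan (m - 1) * ((k + 1 - m + 1) * catalan (k + 1 - m)) * catalan (p - k) := by
          intro k hk
          rw [Finset.mem_Ico] at hk
          rw [ih (k + 1) (by omega) m hm1 (by omega)]
        rw [Finset.sum_congr rfl hval]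
        rw [Finset.sum_Ico_eq_sum_range]
        have e3 : p + 1 - (m - 1) = (p + 1 - m) + 1 := by omega
        rw [e3]
        set s := p + 1 - m with hs
        have hterm : ∀ i ∈ Finset.range (s + 1),
            catalan (m - 1) * ((m - 1 + i + 1 - m + 1) * catalan (m - 1 + i + 1 - m))
              * catalan (p - (m - 1 + i))
            = catalan (m - 1) * ((i + 1) * (catalan i * catalan (s - i))) := by
          intro i hi
          have hi' := Finset.mem_range.mp hi
          have e4 : m - 1 + i + 1 - m = i := by omega
          have e5 : p - (m - 1 + i) = s - i := by omega
          rw [e4, e5]; ring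
        rw [Finset.sum_congr rfl hterm, ← Finset.mul_sum]
        have e6 : p + 2 - m + 1 = s + 2 := by omega
        have e7 : p + 2 - m = s + 1 := by omega
        rw [e6, e7, ← weighted_catalan s]
        ring

end BT
namespace BT

lemma countP_decomp (n K : ℕ) : ∀ ms : Multiset BT, (∀ x ∈ ms, size x ≤ n) →
    ms.countP (fun s => K < size s)
      = ∑ m ∈ Finset.Icc (K + 1) n, ms.countP (fun s => size s = m) := by
  intro ms
  induction ms using Multiset.induction_on with
  | empty => simp
  | cons a s ihq =>
    intro h
    simp only [Multiset.countP_cons]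
    rw [Finset.sum_add_distrib, ihq fun x hx => h x (Multiset.mem_cons_of_mem hx)]
    congr 1
    have ha := h a (Multiset.mem_cons_self a s)
    rw [Finset.sum_ite_eq (Finset.Icc (K + 1) n) (size a) (fun _ => 1)]
    by_cases hc : K < size a
    · rw [if_pos hc, if_pos (Finset.mem_Icc.mpr ⟨by omega, ha⟩)]
    · rw [if_neg hc, if_neg fun hmem => hc (by have := Finset.mem_Icc.mp hmem; omega)]

lemma catalan_pos' (k : ℕ) : 0 < catalan k := by
  have h := succ_mul_catalan_eq_centralBinom k
  have h2 := Nat.centralBinom_pos k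
  rcases Nat.eq_zero_or_pos (catalan k) with h0 | h0
  · rw [h0, mul_zero] at h; omega
  · exact h0

lemma sqrt_mul_le (a b x y : ℝ) (ha : 0 ≤ a) (hb : 0 ≤ b) (h : a ^ 2 * x ≤ b ^ 2 * y) :
    a * Real.sqrt x ≤ b * Real.sqrt y := by
  rcases le_or_gt x 0 with hx | hx
  · rw [Real.sqrt_eq_zero_of_nonpos hx, mul_zero]
    positivity
  · have h1 : a * Real.sqrt x = Real.sqrt (a ^ 2 * x) := by
      rw [Real.sqrt_mul (sq_nonneg a), Real.sqrt_sq ha]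
    have h2 : b * Real.sqrt y = Real.sqrt (b ^ 2 * y) := by
      rw [Real.sqrt_mul (sq_nonneg b), Real.sqrt_sq hb]
    rw [h1, h2]
    exact Real.sqrt_le_sqrt h

lemma le_of_sq_le_sq (a b : ℝ) (ha : 0 ≤ a) (hb : 0 ≤ b) (h : a ^ 2 ≤ b ^ 2) : a ≤ b := by
  rw [← Real.sqrt_sq ha, ← Real.sqrt_sq hb]
  exact Real.sqrt_le_sqrt h

lemma cb_upper : ∀ k : ℕ, (Nat.centralBinom k : ℝ) * Real.sqrt (3 * k + 1) ≤ 4 ^ k := by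
  intro k
  induction k with
  | zero => simp [Nat.centralBinom_zero]
  | succ k ih =>
    have hrec : ((k : ℝ) + 1) * Nat.centralBinom (k + 1)
        = 2 * (2 * k + 1) * Nat.centralBinom k := by
      exact_mod_cast Nat.succ_mul_centralBinom_succ k
    have hkpos : (0:ℝ) < (k : ℝ) + 1 := by positivity
    rw [← mul_le_mul_iff_right₀ hkpos]
    calc ((k:ℝ) + 1) * ((Nat.centralBinom (k+1) : ℝ) * Real.sqrt (3 * (k+1 : ℕ) + 1))
        = (Nat.centralBinom k : ℝ) * ((2 * (2 * k + 1)) * Real.sqrt (3 * (k+1 : ℕ) + 1)) := by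
          rw [← mul_assoc, hrec]; ring
      _ ≤ (Nat.centralBinom k : ℝ) * ((4 * ((k:ℝ) + 1)) * Real.sqrt (3 * k + 1)) := by
          apply mul_le_mul_of_nonneg_left _ (by positivity)
          apply sqrt_mul_le _ _ _ _ (by positivity) (by positivity)
          push_cast
          nlinarith [sq_nonneg ((k:ℝ))]
      _ = ((k:ℝ) + 1) * (4 * ((Nat.centralBinom k : ℝ) * Real.sqrt (3 * k + 1))) := by ring
      _ ≤ ((k:ℝ) + 1) * (4 * 4 ^ k) := by
          apply mul_le_mul_of_nonneg_left _ (by positivity)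
          apply mul_le_mul_of_nonneg_left ih (by norm_num)
      _ = ((k:ℝ) + 1) * 4 ^ (k + 1) := by ring

lemma cb_lower : ∀ k : ℕ, 1 ≤ k → (4:ℝ) ^ k ≤ 2 * Real.sqrt k * Nat.centralBinom k := by
  intro k
  induction k with
  | zero => omega
  | succ k ih =>
    intro _
    rcases Nat.eq_zero_or_pos k with rfl | hk
    · norm_num [Nat.centralBinom]
    · have ih' := ih hk
      have hrec : ((k : ℝ) + 1) * Nat.centralBinom (k + 1)
          = 2 * (2 * k + 1) * Nat.centralBinom k := by
        exact_mod_cast Nat.succ_mul_centralBinom_succ k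
      have hkpos : (0:ℝ) < (k : ℝ) + 1 := by positivity
      rw [← mul_le_mul_iff_right₀ hkpos]
      have hsq : 2 * ((k:ℝ) + 1) * Real.sqrt k ≤ (2 * k + 1) * Real.sqrt ((k:ℕ) + 1 : ℕ) := by
        apply sqrt_mul_le _ _ _ _ (by positivity) (by positivity)
        push_cast
        nlinarith [sq_nonneg ((k:ℝ))]
      have hcb : (0:ℝ) ≤ (Nat.centralBinom k : ℝ) := by positivity
      calc ((k:ℝ) + 1) * (4:ℝ) ^ (k+1) = 4 * ((k:ℝ) + 1) * 4 ^ k := by ring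
        _ ≤ 4 * ((k:ℝ) + 1) * (2 * Real.sqrt k * Nat.centralBinom k) := by
            apply mul_le_mul_of_nonneg_left ih' (by positivity)
        _ = 2 * (2 * ((k:ℝ) + 1) * Real.sqrt k) * 2 * Nat.centralBinom k := by ring
        _ ≤ 2 * ((2 * k + 1) * Real.sqrt ((k:ℕ) + 1 : ℕ)) * 2 * Nat.centralBinom k := by
            apply mul_le_mul_of_nonneg_right _ hcb
            apply mul_le_mul_of_nonneg_right _ (by norm_num)
            apply mul_le_mul_of_nonneg_left hsq (by norm_num)
        _ = ((k:ℝ) + 1) * (2 * Real.sqrt ((k:ℕ) + 1 : ℕ) * Nat.centralBinom (k+1)) := by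
            rw [show ((Nat.centralBinom (k+1)):ℝ) = 2 * (2 * k + 1) * Nat.centralBinom k / ((k:ℝ)+1) by
              field_simp [hrec.symm]; linarith [hrec]]
            field_simp

lemma cat_upper (k : ℕ) : (catalan k : ℝ) * (((k:ℝ) + 1) * Real.sqrt (3 * k + 1)) ≤ 4 ^ k := by
  have h : ((k:ℝ) + 1) * (catalan k : ℝ) = Nat.centralBinom k := by
    exact_mod_cast succ_mul_catalan_eq_centralBinom k
  calc (catalan k : ℝ) * (((k:ℝ) + 1) * Real.sqrt (3 * k + 1))
      = (((k:ℝ) + 1) * catalan k) * Real.sqrt (3 * k + 1) := by ring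
    _ = (Nat.centralBinom k : ℝ) * Real.sqrt (3 * k + 1) := by rw [h]
    _ ≤ 4 ^ k := cb_upper k

lemma cat_lower (k : ℕ) : (4:ℝ) ^ k ≤ 2 * ((k:ℝ) + 1) * Real.sqrt ((k:ℝ) + 1) * catalan k := by
  have h : ((k:ℝ) + 1) * (catalan k : ℝ) = Nat.centralBinom k := by
    exact_mod_cast succ_mul_catalan_eq_centralBinom k
  rcases Nat.eq_zero_or_pos k with rfl | hk
  · norm_num
  · calc (4:ℝ) ^ k ≤ 2 * Real.sqrt k * Nat.centralBinom k := cb_lower k hk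
      _ = 2 * Real.sqrt k * (((k:ℝ) + 1) * catalan k) := by rw [h]
      _ ≤ 2 * Real.sqrt ((k:ℝ) + 1) * (((k:ℝ) + 1) * catalan k) := by
          have : Real.sqrt k ≤ Real.sqrt ((k:ℝ) + 1) := Real.sqrt_le_sqrt (by linarith)
          have hpos : (0:ℝ) ≤ ((k:ℝ) + 1) * catalan k := by positivity
          nlinarith [this, hpos]
      _ = 2 * ((k:ℝ) + 1) * Real.sqrt ((k:ℝ) + 1) * catalan k := by ring

lemma tail32_aux (K : ℕ) (hK : 1 ≤ K) : ∀ N, K ≤ N →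
    ∑ m ∈ Finset.Icc (K + 1) N, 1 / ((m:ℝ) * Real.sqrt m)
      ≤ 2 / Real.sqrt K - 2 / Real.sqrt N := by
  intro N hN
  induction N, hN using Nat.le_induction with
  | base => simp
  | succ N hN ih =>
    rw [Finset.sum_Icc_succ_top (by omega)]
    have hstep : 1 / (((N:ℝ) + 1) * Real.sqrt ((N:ℝ) + 1))
        ≤ 2 / Real.sqrt N - 2 / Real.sqrt ((N:ℝ) + 1) := by
      have hN1 : 1 ≤ N := le_trans hK hN
      have hu : (0:ℝ) < Real.sqrt N := Real.sqrt_pos.mpr (by exact_mod_cast hN1)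
      have hv : (0:ℝ) < Real.sqrt ((N:ℝ) + 1) := Real.sqrt_pos.mpr (by positivity)
      set u := Real.sqrt (N:ℝ) with hudef
      set v := Real.sqrt ((N:ℝ) + 1) with hvdef
      have hu2 : u ^ 2 = N := Real.sq_sqrt (by positivity)
      have hv2 : v ^ 2 = (N:ℝ) + 1 := Real.sq_sqrt (by positivity)
      have key : (2 * (N:ℝ) + 3) * u ≤ 2 * ((N:ℝ) + 1) * v := by
        rw [hudef, hvdef]
        apply sqrt_mul_le _ _ _ _ (by positivity) (by positivity)
        have h1 : (1:ℝ) ≤ N := by exact_mod_cast hN1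
        nlinarith [sq_nonneg ((N:ℝ))]
      have key2 : u * (1 + 2 * v ^ 2) ≤ 2 * v ^ 2 * v := by
        rw [hv2]; nlinarith [key]
      rw [div_sub_div _ _ (ne_of_gt hu) (ne_of_gt hv),
        div_le_div_iff₀ (by positivity) (by positivity)]
      have hmul := mul_le_mul_of_nonneg_left key2 (le_of_lt hv)
      nlinarith [hmul, hu, hv]
    have hcast : ((N + 1 : ℕ) : ℝ) = (N:ℝ) + 1 := by push_cast; ring
    rw [hcast]
    linarith [ih, hstep]

lemma tail32 (K : ℕ) (hK : 1 ≤ K) (N : ℕ) :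
    ∑ m ∈ Finset.Icc (K + 1) N, 1 / ((m:ℝ) * Real.sqrt m) ≤ 2 / Real.sqrt K := by
  rcases le_or_gt K N with h | h
  · have h1 := tail32_aux K hK N h
    have h2 : 0 ≤ 2 / Real.sqrt N := by positivity
    linarith
  · rw [Finset.Icc_eq_empty (by omega)]
    simp
    positivity

lemma sum_inv_sqrt : ∀ N : ℕ, ∑ j ∈ Finset.Icc 1 N, 1 / Real.sqrt j ≤ 2 * Real.sqrt N := by
  intro N
  induction N with
  | zero => simp
  | succ N ih =>
    rw [Finset.sum_Icc_succ_top (by omega)]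
    have hv : (0:ℝ) < Real.sqrt ((N:ℝ) + 1) := Real.sqrt_pos.mpr (by positivity)
    set u := Real.sqrt (N:ℝ) with hudef
    set v := Real.sqrt ((N:ℝ) + 1) with hvdef
    have hu0 : 0 ≤ u := Real.sqrt_nonneg _
    have hu2 : u ^ 2 = N := Real.sq_sqrt (by positivity)
    have hv2 : v ^ 2 = (N:ℝ) + 1 := Real.sq_sqrt (by positivity)
    have key : 2 * (u * v) ≤ 2 * (N:ℝ) + 1 := by
      have h2 : 2 * (u * v) = 2 * Real.sqrt ((N:ℝ) * ((N:ℝ) + 1)) := by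
        rw [hudef, hvdef, ← Real.sqrt_mul (by positivity)]
      rw [h2]
      have := sqrt_mul_le 2 (2 * (N:ℝ) + 1) ((N:ℝ) * ((N:ℝ) + 1)) 1
        (by norm_num) (by positivity) (by nlinarith [sq_nonneg ((N:ℝ))])
      simpa using this
    have hstep : 1 / v + 2 * u ≤ 2 * v := by
      rw [← mul_le_mul_iff_left₀ hv]
      have : (1 / v + 2 * u) * v = 1 + 2 * (u * v) := by
        rw [add_mul, one_div, inv_mul_cancel₀ (ne_of_gt hv)]; ring
      rw [this]
      nlinarith [key, hv2]
    have hcast : ((N + 1 : ℕ) : ℝ) = (N:ℝ) + 1 := by push_cast; ring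
    rw [hcast]
    linarith [ih, hstep]

lemma sum_inv_sqrt_rev (a n : ℕ) (ha : 1 ≤ a) :
    ∑ m ∈ Finset.Icc a n, 1 / Real.sqrt ((n - m + 1 : ℕ) : ℝ) ≤ 2 * Real.sqrt n := by
  have hinj : Set.InjOn (fun m => n - m + 1) (Finset.Icc a n) := by
    intro x hx y hy hxy
    simp only [Finset.coe_Icc, Set.mem_Icc] at hx hy
    simp only at hxy
    omega
  calc ∑ m ∈ Finset.Icc a n, 1 / Real.sqrt ((n - m + 1 : ℕ) : ℝ)
      = ∑ j ∈ (Finset.Icc a n).image (fun m => n - m + 1), 1 / Real.sqrt (j : ℝ) := by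
        rw [Finset.sum_image (fun x hx y hy h => hinj hx hy h)]
    _ ≤ ∑ j ∈ Finset.Icc 1 n, 1 / Real.sqrt (j : ℝ) := by
        apply Finset.sum_le_sum_of_subset_of_nonneg
        · intro j hj
          simp only [Finset.mem_image, Finset.mem_Icc] at hj ⊢
          obtain ⟨m, ⟨hm1, hm2⟩, rfl⟩ := hj
          omega
        · intro j _ _
          positivity
    _ ≤ 2 * Real.sqrt n := sum_inv_sqrt n

end BT
namespace BT

lemma term_bound (n m : ℕ) (hm2 : 2 ≤ m) (hmn : m ≤ n) :
    ((catalan (m - 1) * ((n - m + 1) * catalan (n - m)) : ℕ) : ℝ) / (catalan (n - 1) : ℝ)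
      ≤ 2 * (n:ℝ) * Real.sqrt n
          / (((m:ℝ) * Real.sqrt m) * Real.sqrt ((n - m + 1 : ℕ) : ℝ)) := by
  set j := n - m with hj
  have hc : (0:ℝ) < (catalan (n - 1) : ℝ) := by exact_mod_cast catalan_pos' (n - 1)
  have hm0 : (0:ℝ) < m := by exact_mod_cast (by omega : 0 < m)
  have hu : (0:ℝ) < (m:ℝ) * Real.sqrt m := mul_pos hm0 (Real.sqrt_pos.mpr hm0)
  have hj0 : (0:ℝ) < ((j + 1 : ℕ) : ℝ) := by exact_mod_cast (by omega : 0 < j + 1)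
  have hw : (0:ℝ) < Real.sqrt ((j + 1 : ℕ) : ℝ) := Real.sqrt_pos.mpr hj0
  -- bound 1 : catalan (m-1) * (m * sqrt m) ≤ 4 ^ (m-1)
  have h1 : (catalan (m - 1) : ℝ) * ((m:ℝ) * Real.sqrt m) ≤ 4 ^ (m - 1) := by
    have hcast : ((m - 1 : ℕ) : ℝ) = (m:ℝ) - 1 := by
      push_cast [Nat.cast_sub (by omega : 1 ≤ m)]; ring
    have hup := cat_upper (m - 1)
    rw [hcast] at hup
    have hsq : Real.sqrt m ≤ Real.sqrt (3 * ((m:ℝ) - 1) + 1) := by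
      apply Real.sqrt_le_sqrt
      have : (2:ℝ) ≤ m := by exact_mod_cast hm2
      linarith
    calc (catalan (m - 1) : ℝ) * ((m:ℝ) * Real.sqrt m)
        ≤ (catalan (m - 1) : ℝ) * ((m:ℝ) * Real.sqrt (3 * ((m:ℝ) - 1) + 1)) := by
          apply mul_le_mul_of_nonneg_left _ (by positivity)
          exact mul_le_mul_of_nonneg_left hsq (by positivity)
      _ = (catalan (m - 1) : ℝ) * (((m:ℝ) - 1 + 1) * Real.sqrt (3 * ((m:ℝ) - 1) + 1)) := by
          ring_nf
      _ ≤ 4 ^ (m - 1) := hup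
  -- bound 2 : (j+1) * catalan j * sqrt (j+1) ≤ 4 ^ j
  have h2 : (((j + 1 : ℕ) : ℝ) * (catalan j : ℝ)) * Real.sqrt ((j + 1 : ℕ) : ℝ) ≤ 4 ^ j := by
    have hup := cat_upper j
    have hsq : Real.sqrt ((j + 1 : ℕ) : ℝ) ≤ Real.sqrt (3 * (j:ℝ) + 1) := by
      apply Real.sqrt_le_sqrt; push_cast; linarith [Nat.cast_nonneg (α := ℝ) j]
    have hcast : ((j + 1 : ℕ) : ℝ) = (j:ℝ) + 1 := by push_cast; ring
    calc (((j + 1 : ℕ) : ℝ) * (catalan j : ℝ)) * Real.sqrt ((j + 1 : ℕ) : ℝ)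
        ≤ (((j + 1 : ℕ) : ℝ) * (catalan j : ℝ)) * Real.sqrt (3 * (j:ℝ) + 1) := by
          apply mul_le_mul_of_nonneg_left hsq (by positivity)
      _ = (catalan j : ℝ) * (((j:ℝ) + 1) * Real.sqrt (3 * (j:ℝ) + 1)) := by
          rw [hcast]; ring
      _ ≤ 4 ^ j := hup
  -- bound 3 : 4 ^ (n-1) ≤ 2 n sqrt n * catalan (n-1)
  have h3 : (4:ℝ) ^ (n - 1) ≤ 2 * (n:ℝ) * Real.sqrt n * (catalan (n - 1) : ℝ) := by
    have hlo := cat_lower (n - 1)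
    have hcast : ((n - 1 : ℕ) : ℝ) + 1 = (n:ℝ) := by
      push_cast [Nat.cast_sub (by omega : 1 ≤ n)]; ring
    rw [hcast] at hlo
    exact hlo
  have hpow : (4:ℝ) ^ (m - 1) * 4 ^ j = 4 ^ (n - 1) := by
    rw [← pow_add]
    congr 1
    omega
  rw [div_le_div_iff₀ hc (mul_pos hu hw)]
  have hnumcast : (((catalan (m - 1) * ((j + 1) * catalan j)) : ℕ) : ℝ)
      = (catalan (m - 1) : ℝ) * (((j + 1 : ℕ) : ℝ) * (catalan j : ℝ)) := by
    norm_cast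
  rw [hnumcast]
  calc (catalan (m - 1) : ℝ) * (((j + 1 : ℕ) : ℝ) * (catalan j : ℝ))
        * (((m:ℝ) * Real.sqrt m) * Real.sqrt ((j + 1 : ℕ) : ℝ))
      = ((catalan (m - 1) : ℝ) * ((m:ℝ) * Real.sqrt m))
          * ((((j + 1 : ℕ) : ℝ) * (catalan j : ℝ)) * Real.sqrt ((j + 1 : ℕ) : ℝ)) := by
        ring
    _ ≤ 4 ^ (m - 1) * 4 ^ j := by
        apply mul_le_mul h1 h2 (by positivity) (by positivity)
    _ = 4 ^ (n - 1) := hpow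
    _ ≤ 2 * (n:ℝ) * Real.sqrt n * (catalan (n - 1) : ℝ) := h3

lemma split_bound (n m : ℕ) (hm : 1 ≤ m) (hmn : m ≤ n) :
    2 * (n:ℝ) * Real.sqrt n / (((m:ℝ) * Real.sqrt m) * Real.sqrt ((n - m + 1 : ℕ) : ℝ))
      ≤ 2 * Real.sqrt 2 * (n:ℝ) * (1 / ((m:ℝ) * Real.sqrt m))
        + 4 * Real.sqrt 2 * (1 / Real.sqrt ((n - m + 1 : ℕ) : ℝ)) := by
  have hm0 : (0:ℝ) < m := by exact_mod_cast (by omega : 0 < m)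
  have hu : (0:ℝ) < (m:ℝ) * Real.sqrt m := mul_pos hm0 (Real.sqrt_pos.mpr hm0)
  have hj0 : (0:ℝ) < ((n - m + 1 : ℕ) : ℝ) := by exact_mod_cast (by omega : 0 < n - m + 1)
  have hw : (0:ℝ) < Real.sqrt ((n - m + 1 : ℕ) : ℝ) := Real.sqrt_pos.mpr hj0
  set u : ℝ := (m:ℝ) * Real.sqrt m with hudef
  set w : ℝ := Real.sqrt ((n - m + 1 : ℕ) : ℝ) with hwdef
  by_cases hc : 2 * m ≤ n + 1
  · -- small m : sqrt n ≤ sqrt 2 * w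
    have hnw : Real.sqrt n ≤ Real.sqrt 2 * w := by
      rw [hwdef, show Real.sqrt 2 * Real.sqrt ((n - m + 1 : ℕ) : ℝ)
          = Real.sqrt (2 * ((n - m + 1 : ℕ) : ℝ)) by rw [Real.sqrt_mul (by norm_num)]]
      apply Real.sqrt_le_sqrt
      have h : (n : ℕ) ≤ 2 * (n - m + 1) := by omega
      exact_mod_cast h
    have key : 2 * (n:ℝ) * Real.sqrt n / (u * w) ≤ 2 * Real.sqrt 2 * (n:ℝ) * (1 / u) := by
      rw [show 2 * Real.sqrt 2 * (n:ℝ) * (1 / u) = 2 * (n:ℝ) * (Real.sqrt 2 * w) / (u * w) by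
        field_simp]
      rw [div_le_div_iff₀ (mul_pos hu hw) (mul_pos hu hw)]
      have := mul_le_mul_of_nonneg_left hnw (show (0:ℝ) ≤ 2 * n by positivity)
      nlinarith [this, mul_pos hu hw]
    have hpos : (0:ℝ) ≤ 4 * Real.sqrt 2 * (1 / w) := by positivity
    linarith [key, hpos]
  · -- large m : n * sqrt n ≤ 2 sqrt 2 * u
    have hsn : (Real.sqrt (n:ℝ)) ^ 2 = n := Real.sq_sqrt (by positivity)
    have hsm : (Real.sqrt (m:ℝ)) ^ 2 = m := Real.sq_sqrt (by positivity)
    have hs2 : (Real.sqrt (2:ℝ)) ^ 2 = 2 := Real.sq_sqrt (by norm_num)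
    have hnu : (n:ℝ) * Real.sqrt n ≤ 2 * Real.sqrt 2 * u := by
      apply le_of_sq_le_sq _ _ (by positivity) (by positivity)
      have e1 : ((n:ℝ) * Real.sqrt n) ^ 2 = (n:ℝ) ^ 3 := by
        rw [mul_pow, hsn]; ring
      have e2 : (2 * Real.sqrt 2 * u) ^ 2 = 8 * (m:ℝ) ^ 3 := by
        rw [hudef, mul_pow, mul_pow, hs2, mul_pow, hsm]; ring
      have hcube : (n:ℝ) ^ 3 ≤ (2 * (m:ℝ)) ^ 3 := by
        apply pow_le_pow_left₀ (by positivity)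
        exact_mod_cast (by omega : n ≤ 2 * m)
      rw [e1, e2]
      nlinarith [hcube]
    have key : 2 * (n:ℝ) * Real.sqrt n / (u * w) ≤ 4 * Real.sqrt 2 * (1 / w) := by
      rw [show 4 * Real.sqrt 2 * (1 / w) = 2 * (2 * Real.sqrt 2 * u) / (u * w) by
        field_simp; ring]
      rw [div_le_div_iff₀ (mul_pos hu hw) (mul_pos hu hw)]
      nlinarith [hnu, mul_pos hu hw]
    have hpos : (0:ℝ) ≤ 2 * Real.sqrt 2 * (n:ℝ) * (1 / u) := by positivity
    linarith [key, hpos]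

end BT
open BT in
/-- For fixed `0 < ε < 1/3`, there is a constant `C > 0` such that the
expected number `E(Y_{n,ε})` of fringe subtrees with more than `n^ε` leaves in a
uniformly random ordered binary tree with `n` leaves satisfies
`E(Y_{n,ε}) ≤ C·n^{1−ε/2}` for all `n ≥ 1`. -/
theorem expected_large_fringe_count_uniform
    (ε : ℝ) (hε0 : 0 < ε) (hε : ε < 1 / 3) :
    ∃ C : ℝ, 0 < C ∧ ∀ n : ℕ, 1 ≤ n →
      unifE n (fun t =>
          (Multiset.countP (fun s => (n : ℝ) ^ ε < (size s : ℝ)) (fringe t) : ℝ))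
        ≤ C * (n : ℝ) ^ (1 - ε / 2) := by
  refine ⟨20, by norm_num, ?_⟩
  intro n hn
  set K := ⌊(n:ℝ) ^ ε⌋₊ with hKdef
  have hn0 : (0:ℝ) < n := by exact_mod_cast hn
  have hnε1 : (1:ℝ) ≤ (n:ℝ) ^ ε := Real.one_le_rpow (by exact_mod_cast hn) (le_of_lt hε0)
  have hK1 : 1 ≤ K := Nat.le_floor (by exact_mod_cast hnε1)
  have hKpos : (0:ℝ) < Real.sqrt K :=
    Real.sqrt_pos.mpr (by exact_mod_cast (by omega : 0 < K))
  have hstep1 : ∀ t ∈ treesOfSize n,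
      Multiset.countP (fun s => (n:ℝ) ^ ε < (size s : ℝ)) (fringe t)
        = ∑ m ∈ Finset.Icc (K + 1) n, Multiset.countP (fun s => size s = m) (fringe t) := by
    intro t ht
    have hpred : Multiset.countP (fun s => (n:ℝ) ^ ε < (size s : ℝ)) (fringe t)
        = Multiset.countP (fun s => K < size s) (fringe t) := by
      apply Multiset.countP_congr rfl
      intro x _
      simp only [eq_iff_iff]
      exact ((Nat.floor_lt (by positivity : (0:ℝ) ≤ (n:ℝ) ^ ε)).symm :
        ((n:ℝ) ^ ε < (size x : ℝ)) ↔ K < size x)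
    rw [hpred]
    apply countP_decomp
    intro x hx
    have h1 := size_le_of_mem_fringe t x hx
    rw [size_of_mem n t ht] at h1
    exact h1
  have hG : ∑ t ∈ treesOfSize n,
        Multiset.countP (fun s => (n:ℝ) ^ ε < (size s : ℝ)) (fringe t)
      = ∑ m ∈ Finset.Icc (K + 1) n, catalan (m - 1) * ((n - m + 1) * catalan (n - m)) := by
    rw [Finset.sum_congr rfl hstep1, Finset.sum_comm]
    refine Finset.sum_congr rfl fun m hm => ?_
    have hm' := Finset.mem_Icc.mp hm
    exact G_eq n m (by omega) hm'.2
  have hcard : ((treesOfSize n).card : ℝ) = (catalan (n - 1) : ℝ) := by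
    have h : treesOfSize n = treesOfSize ((n - 1) + 1) := by congr 1; omega
    rw [h, card_treesOfSize]
  have hcpos : (0:ℝ) < (catalan (n - 1) : ℝ) := by exact_mod_cast catalan_pos' (n - 1)
  rw [unifE, hcard]
  rw [show ∑ t ∈ treesOfSize n,
      ((Multiset.countP (fun s => (n:ℝ) ^ ε < (size s : ℝ)) (fringe t) : ℕ) : ℝ)
      = ((∑ t ∈ treesOfSize n,
          Multiset.countP (fun s => (n:ℝ) ^ ε < (size s : ℝ)) (fringe t) : ℕ) : ℝ) by
    rw [Nat.cast_sum]]
  rw [hG, Nat.cast_sum, Finset.sum_div]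
  have hterm : ∀ m ∈ Finset.Icc (K + 1) n,
      ((catalan (m - 1) * ((n - m + 1) * catalan (n - m)) : ℕ) : ℝ) / (catalan (n - 1) : ℝ)
        ≤ 2 * Real.sqrt 2 * (n:ℝ) * (1 / ((m:ℝ) * Real.sqrt m))
          + 4 * Real.sqrt 2 * (1 / Real.sqrt ((n - m + 1 : ℕ) : ℝ)) := by
    intro m hm
    have hm' := Finset.mem_Icc.mp hm
    exact le_trans (term_bound n m (by omega) hm'.2) (split_bound n m (by omega) hm'.2)
  have h22 : Real.sqrt 2 * Real.sqrt 2 = 2 := Real.mul_self_sqrt (by norm_num)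
  have hs2nn : (0:ℝ) ≤ Real.sqrt 2 := Real.sqrt_nonneg 2
  have hrpnn : (0:ℝ) ≤ (n:ℝ) ^ (1 - ε / 2) := Real.rpow_nonneg (le_of_lt hn0) _
  calc ∑ m ∈ Finset.Icc (K + 1) n,
        ((catalan (m - 1) * ((n - m + 1) * catalan (n - m)) : ℕ) : ℝ) / (catalan (n - 1) : ℝ)
      ≤ ∑ m ∈ Finset.Icc (K + 1) n,
        (2 * Real.sqrt 2 * (n:ℝ) * (1 / ((m:ℝ) * Real.sqrt m))
          + 4 * Real.sqrt 2 * (1 / Real.sqrt ((n - m + 1 : ℕ) : ℝ))) :=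
      Finset.sum_le_sum hterm
    _ = 2 * Real.sqrt 2 * (n:ℝ) * (∑ m ∈ Finset.Icc (K + 1) n, 1 / ((m:ℝ) * Real.sqrt m))
        + 4 * Real.sqrt 2 * (∑ m ∈ Finset.Icc (K + 1) n,
            1 / Real.sqrt ((n - m + 1 : ℕ) : ℝ)) := by
      rw [Finset.sum_add_distrib, ← Finset.mul_sum, ← Finset.mul_sum]
    _ ≤ 2 * Real.sqrt 2 * (n:ℝ) * (2 / Real.sqrt K)
        + 4 * Real.sqrt 2 * (2 * Real.sqrt n) := by
      apply add_le_add
      · exact mul_le_mul_of_nonneg_left (tail32 K hK1 n) (by positivity)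
      · exact mul_le_mul_of_nonneg_left (sum_inv_sqrt_rev (K + 1) n (by omega)) (by positivity)
    _ ≤ 20 * (n:ℝ) ^ (1 - ε / 2) := by
      have haveA : (n:ℝ) ^ (ε / 2) ≤ Real.sqrt 2 * Real.sqrt K := by
        have h1 : (n:ℝ) ^ ε ≤ 2 * K := by
          have h2 : (n:ℝ) ^ ε < (K:ℝ) + 1 := Nat.lt_floor_add_one _
          have h3 : (1:ℝ) ≤ (K:ℝ) := by exact_mod_cast hK1
          linarith
        have heq : (n:ℝ) ^ (ε / 2) = Real.sqrt ((n:ℝ) ^ ε) := by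
          rw [Real.sqrt_eq_rpow, ← Real.rpow_mul (le_of_lt hn0)]
          ring_nf
        rw [heq]
        calc Real.sqrt ((n:ℝ) ^ ε) ≤ Real.sqrt (2 * K) := Real.sqrt_le_sqrt h1
          _ = Real.sqrt 2 * Real.sqrt K := Real.sqrt_mul (by norm_num) _
      have haveB : (n:ℝ) = (n:ℝ) ^ (1 - ε / 2) * (n:ℝ) ^ (ε / 2) := by
        rw [← Real.rpow_add hn0]
        norm_num
      have hdiv : (n:ℝ) ^ (ε / 2) / Real.sqrt K ≤ Real.sqrt 2 :=
        (div_le_iff₀ hKpos).mpr (by linarith [haveA])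
      have haveC : 2 * Real.sqrt 2 * (n:ℝ) * (2 / Real.sqrt K)
          ≤ 8 * (n:ℝ) ^ (1 - ε / 2) := by
        have e : (n:ℝ) / Real.sqrt K
            = (n:ℝ) ^ (1 - ε / 2) * ((n:ℝ) ^ (ε / 2) / Real.sqrt K) := by
          rw [mul_div_assoc', ← haveB]
        calc 2 * Real.sqrt 2 * (n:ℝ) * (2 / Real.sqrt K)
            = 4 * Real.sqrt 2 * ((n:ℝ) / Real.sqrt K) := by ring
          _ = 4 * Real.sqrt 2 * ((n:ℝ) ^ (1 - ε / 2) * ((n:ℝ) ^ (ε / 2) / Real.sqrt K)) := by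
              rw [e]
          _ ≤ 4 * Real.sqrt 2 * ((n:ℝ) ^ (1 - ε / 2) * Real.sqrt 2) := by
              apply mul_le_mul_of_nonneg_left _ (by positivity)
              exact mul_le_mul_of_nonneg_left hdiv hrpnn
          _ = 4 * (Real.sqrt 2 * Real.sqrt 2) * (n:ℝ) ^ (1 - ε / 2) := by ring
          _ = 8 * (n:ℝ) ^ (1 - ε / 2) := by rw [h22]; ring
      have haveD : Real.sqrt n ≤ (n:ℝ) ^ (1 - ε / 2) := by
        rw [Real.sqrt_eq_rpow]
        apply Real.rpow_le_rpow_of_exponent_le (by exact_mod_cast hn)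
        linarith
      have haveE : Real.sqrt 2 ≤ 3 / 2 := by
        rw [show (3/2:ℝ) = Real.sqrt ((3/2)^2) from (Real.sqrt_sq (by norm_num)).symm]
        exact Real.sqrt_le_sqrt (by norm_num)
      have haveF : 4 * Real.sqrt 2 * (2 * Real.sqrt n) ≤ 12 * (n:ℝ) ^ (1 - ε / 2) := by
        calc 4 * Real.sqrt 2 * (2 * Real.sqrt n)
            ≤ 4 * (3/2) * (2 * (n:ℝ) ^ (1 - ε / 2)) := by
              apply mul_le_mul (by linarith) (by linarith [haveD, Real.sqrt_nonneg (n:ℝ)])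
                (by positivity) (by norm_num)
          _ = 12 * (n:ℝ) ^ (1 - ε / 2) := by ring
      linarith [haveC, haveF]
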